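/- Let M_1, …, M_n, N_1, …, N_n be d×d complex matrices with M_j M_i = 0 for all i, j, M_j N_i = 0 whenever i ≠ j, and M_i N_i ≠ 0 for all i. Then the intersection (∑_i range M_i) ∩ (∑_i range N_i) has dimension at most d − n. -/

import Mathlib

theorem stmt_2 (n d : ℕ)
    (M N : Fin n → ((Fin d → ℂ) →ₗ[ℂ] (Fin d → ℂ)))
    (hMM : ∀ i j : Fin n, M j ∘ₗ M i = 0)
    (hMN : ∀ i j : Fin n, i ≠ j → M j ∘ₗ N i = 0)
    (hMNne : ∀ i : Fin n, M i ∘ₗ N i ≠ 0) :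
    Module.finrank ℂ
      ↥((⨆ i, LinearMap.range (M i)) ⊓ (⨆ i, LinearMap.range (N i))) ≤ d - n := by
  classical
  set Φ : (Fin d → ℂ) →ₗ[ℂ] (Fin n → (Fin d → ℂ)) := LinearMap.pi (fun j => M j) with hΦ
  have hv : ∀ i : Fin n, ∃ v, M i (N i v) ≠ 0 := by
    intro i
    by_contra h
    push_neg at h
    exact hMNne i (LinearMap.ext fun v => h v)
  choose v hvne using hv
  set x : Fin n → (Fin d → ℂ) := fun i => N i (v i) with hx
  have hΦx : ∀ i, Φ (x i) = Pi.single i (M i (x i)) := by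
    intro i
    funext j
    by_cases hij : j = i
    · subst hij; simp [hΦ, LinearMap.pi_apply]
    · have h0 : M j (N i (v i)) = 0 := by
        have := hMN i j (fun h => hij h.symm)
        exact DFunLike.congr_fun this (v i)
      simp [hΦ, LinearMap.pi_apply, Pi.single_eq_of_ne hij, hx, h0]
  have hli : LinearIndependent ℂ (fun i => Φ (x i)) := by
    rw [Fintype.linearIndependent_iff]
    intro c hc i
    have := congrFun hc i
    simp only [Finset.sum_apply, Pi.smul_apply, Pi.zero_apply] at this
    rw [Finset.sum_eq_single i] at this
    · rw [hΦx i] at this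
      simp only [Pi.single_eq_same] at this
      by_contra hci
      exact hvne i (by
        have := smul_eq_zero.mp this
        tauto)
    · intro b _ hb
      rw [hΦx b]
      simp [Pi.single_eq_of_ne (Ne.symm hb)]
    · intro h; exact absurd (Finset.mem_univ i) h
  have hrange : n ≤ Module.finrank ℂ (LinearMap.range Φ) := by
    have hli' : LinearIndependent ℂ
        (fun i => (⟨Φ (x i), LinearMap.mem_range_self Φ (x i)⟩ : LinearMap.range Φ)) := by
      apply LinearIndependent.of_comp (LinearMap.range Φ).subtype
      exact hli
    simpa using hli'.fintype_card_le_finrank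
  have hrn : Module.finrank ℂ (LinearMap.range Φ) + Module.finrank ℂ (LinearMap.ker Φ)
      = d := by
    rw [LinearMap.finrank_range_add_finrank_ker]
    simp
  have hker : Module.finrank ℂ (LinearMap.ker Φ) ≤ d - n := by omega
  have hle : (⨆ i, LinearMap.range (M i)) ⊓ (⨆ i, LinearMap.range (N i))
      ≤ LinearMap.ker Φ := by
    refine le_trans inf_le_left ?_
    rw [hΦ, LinearMap.ker_pi]
    refine iSup_le fun i => le_iInf fun j => ?_
    rw [LinearMap.range_le_ker_iff]
    exact hMM i j
  exact le_trans (Submodule.finrank_mono hle) hker
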